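/- Suppose F : ℝⁿ → ℝ is convex, the constraint functions Q_j : ℝⁿ → ℝ (j = 1,…,J) are convex, X ⊆ ℝⁿ is convex and compact with diameter at most D_x, F is L-Lipschitz on X with L = √(C_g·C_f), and there exist x̃ ∈ X and σ > 0 with Q_j(x̃) + σ ≤ 0 for all j. Let 0 < γ < σ/2 and assume strong duality holds for the perturbed problem min{F(x) : x ∈ X, Q_j(x) + γ ≤ 0 ∀j} with optimal solution x^γ and dual optimal λ^γ ≥ 0. Then the sum of the dual multipliers satisfies Σ_j λ^γ_j ≤ 2·L·D_x/σ. -/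
import Mathlib


/-- Bound on the sum of optimal dual multipliers of the `γ`-perturbed problem:
under convexity, a Slater point with slack `σ`, compactness (diameter `D_x`),
`L`-Lipschitz continuity of `F` on `X`, `0 < γ < σ/2`, and strong duality for the
perturbed problem, the dual optimal `λ^γ ≥ 0` satisfies `Σ_j λ^γ_j ≤ 2·L·D_x/σ`. -/
theorem dual_multiplier_sum_bound {n J : ℕ}
    (F : EuclideanSpace ℝ (Fin n) → ℝ) (Q : Fin J → EuclideanSpace ℝ (Fin n) → ℝ)
    (X : Set (EuclideanSpace ℝ (Fin n))) (Dx L σ γ : ℝ)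
    (xγ : EuclideanSpace ℝ (Fin n)) (lam : Fin J → ℝ) (xt : EuclideanSpace ℝ (Fin n))
    (hXconv : Convex ℝ X) (hXcomp : IsCompact X)
    (hFconv : ConvexOn ℝ X F) (hQconv : ∀ j, ConvexOn ℝ X (Q j))
    (hDx : ∀ x ∈ X, ∀ x' ∈ X, ‖x - x'‖ ≤ Dx)
    (hL : 0 ≤ L) (hLip : ∀ x ∈ X, ∀ x' ∈ X, |F x - F x'| ≤ L * ‖x - x'‖)
    (hxt : xt ∈ X) (hσ : 0 < σ) (hSlater : ∀ j, Q j xt + σ ≤ 0)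
    (hγ : 0 < γ) (hγσ : γ < σ / 2)
    (hlam : ∀ j, 0 ≤ lam j)
    (hxγ : xγ ∈ X) (hxγfeas : ∀ j, Q j xγ + γ ≤ 0)
    (hStrong : IsLeast
      {v : ℝ | ∃ x ∈ X, v = F x + ∑ j, lam j * (Q j x + γ)} (F xγ)) :
    ∑ j, lam j ≤ 2 * L * Dx / σ := by
  have h1 : F xγ ≤ F xt + ∑ j, lam j * (Q j xt + γ) :=
    hStrong.2 ⟨xt, hxt, rfl⟩
  have h2 : ∑ j, lam j * (Q j xt + γ) ≤ ∑ j, lam j * (-(σ / 2)) := by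
    apply Finset.sum_le_sum
    intro j _
    apply mul_le_mul_of_nonneg_left _ (hlam j)
    have := hSlater j
    linarith
  have h3 : ∑ j, lam j * (-(σ / 2)) = -(σ / 2) * ∑ j, lam j := by
    rw [← Finset.sum_mul, neg_mul, mul_comm, neg_mul]
  have h4 : |F xt - F xγ| ≤ L * ‖xt - xγ‖ := hLip xt hxt xγ hxγ
  have h5 : ‖xt - xγ‖ ≤ Dx := hDx xt hxt xγ hxγ
  have h6 : F xt - F xγ ≤ L * Dx := by
    have := abs_le.mp h4
    nlinarith [mul_le_mul_of_nonneg_left h5 hL]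
  have h7 : (σ / 2) * ∑ j, lam j ≤ L * Dx := by
    rw [h3] at h2; linarith
  rw [le_div_iff₀ hσ]
  nlinarith [h7]
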